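/- Let n ≥ 4 be an integer, let φ = 400000·n², let r = (n−3)/n, and let i be an integer with 1 ≤ i and i + 1 ≤ n. Then for all reals s₁, …, s_{n+3} ∈ [0, 1/φ], w ∈ [−r^{2i−1}, −r^{2i−1} + 1/φ], t ∈ [−1/φ, 0], p₁, …, p_{n+4} ∈ [0, 1/φ], and q ∈ [−r^{2i}, −r^{2i} + 1/φ]: w + ∑_{j=1}^{n+3} s_j + t < q + ∑_{j=1}^{n+4} p_j. In particular (worst case) −r^{2i−1} + (n+4)/φ < −r^{2i}. -/

import Mathlib

/-- Lemma 13: in the instance `H` (with `φ = 400000·n²`, `r = (n−3)/n`), the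
`(n+5)`-edge cycle `C₁ = (b,xᵢ,c₁,…,c₂,v,u,b)` has lower total cost than the
`(n+5)`-edge cycle `C₂ = (d,w_{i+1},a₁,…,a₂,u,v,d)`, for every realization of the edge
costs in their intervals. -/
theorem stmt14 (n : ℕ) (hn : 4 ≤ n) (φ r : ℝ)
    (hφ : φ = 400000 * (n : ℝ) ^ 2) (hr : r = ((n : ℝ) - 3) / n)
    (i : ℕ) (hi1 : 1 ≤ i) (hin : i + 1 ≤ n) :
    (∀ (s : Fin (n + 3) → ℝ) (w t : ℝ) (p : Fin (n + 4) → ℝ) (q : ℝ),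
        (∀ j, s j ∈ Set.Icc (0 : ℝ) (1 / φ)) →
        w ∈ Set.Icc (-r ^ (2 * i - 1)) (-r ^ (2 * i - 1) + 1 / φ) →
        t ∈ Set.Icc (-(1 / φ)) (0 : ℝ) →
        (∀ j, p j ∈ Set.Icc (0 : ℝ) (1 / φ)) →
        q ∈ Set.Icc (-r ^ (2 * i)) (-r ^ (2 * i) + 1 / φ) →
        w + ∑ j, s j + t < q + ∑ j, p j)
    ∧ -r ^ (2 * i - 1) + ((n : ℝ) + 4) / φ < -r ^ (2 * i) := by
  have hn4 : (4 : ℝ) ≤ n := by exact_mod_cast hn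
  have hnpos : (0 : ℝ) < n := by linarith
  have hφpos : 0 < φ := by rw [hφ]; positivity
  have hr0 : 0 < r := by
    rw [hr]; apply div_pos <;> linarith
  have hr1 : r < 1 := by
    rw [hr, div_lt_one hnpos]; linarith
  -- key numeric bound : r ^ (2n) > 1/600000
  have hK : (1 : ℝ) / 600000 < r ^ (2 * n) := by
    rcases lt_or_ge n 6 with h6 | h6
    · interval_cases n
      · have : r = 1 / 4 := by rw [hr]; norm_num
        rw [this]; norm_num
      · have : r = 2 / 5 := by rw [hr]; norm_num
        rw [this]; norm_num
    · -- n ≥ 6 : r ≥ 1/(1 + 6/n) and (1+6/n)^(2n) ≤ exp 12 < 600000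
      have hn6 : (6 : ℝ) ≤ n := by exact_mod_cast h6
      set u : ℝ := 1 + 6 / n with hu
      have hu1 : 1 ≤ u := by
        have : 0 < 6 / (n : ℝ) := by positivity
        simp [hu]; linarith
      have hru : 1 ≤ r * u := by
        rw [hr, hu]
        have h1 : ((n : ℝ) - 3) / n * (1 + 6 / n) = 1 + (3 * n - 18) / n ^ 2 := by
          field_simp; ring
        rw [h1]
        have : 0 ≤ (3 * (n : ℝ) - 18) / n ^ 2 := by
          apply div_nonneg; linarith; positivity
        linarith
      have hup : u ^ (2 * n) ≤ Real.exp 12 := by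
        have h1 : u ≤ Real.exp (6 / n) := by
          have := Real.add_one_le_exp (6 / (n : ℝ))
          rw [hu]; linarith
        calc u ^ (2 * n) ≤ Real.exp (6 / n) ^ (2 * n) := by
              apply pow_le_pow_left₀ (by linarith) h1
          _ = Real.exp ((2 * n : ℕ) * (6 / n)) := by
              rw [← Real.exp_nat_mul]
          _ = Real.exp 12 := by
              congr 1
              have hn0 : (n : ℝ) ≠ 0 := ne_of_gt hnpos
              push_cast
              field_simp; ring
      have hexp : Real.exp 12 < 600000 := by
        have h1 : Real.exp 12 = Real.exp 1 ^ 12 := by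
          rw [← Real.exp_nat_mul]; norm_num
        have h2 : Real.exp 1 ^ 12 < 2.7182818286 ^ 12 := by
          apply pow_lt_pow_left₀ Real.exp_one_lt_d9 (Real.exp_pos 1).le
          norm_num
        have h3 : (2.7182818286 : ℝ) ^ 12 < 600000 := by norm_num
        linarith
      have hupos : 0 < u ^ (2 * n) := by positivity
      have h2 : 1 / u ^ (2 * n) ≤ r ^ (2 * n) := by
        rw [div_le_iff₀ hupos, ← mul_pow]
        calc (1 : ℝ) = 1 ^ (2 * n) := (one_pow _).symm
          _ ≤ (r * u) ^ (2 * n) := by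
              apply pow_le_pow_left₀ (by norm_num) hru
      have h3 : (1 : ℝ) / 600000 < 1 / u ^ (2 * n) := by
        apply div_lt_div_of_pos_left (by norm_num) hupos
        calc u ^ (2 * n) ≤ Real.exp 12 := hup
          _ < 600000 := hexp
      linarith
  -- second conjunct
  have key : -r ^ (2 * i - 1) + ((n : ℝ) + 4) / φ < -r ^ (2 * i) := by
    have hsplit : r ^ (2 * i) = r ^ (2 * i - 1) * r := by
      rw [← pow_succ]; congr 1; omega
    have hmono : r ^ (2 * n) ≤ r ^ (2 * i - 1) :=
      pow_le_pow_of_le_one hr0.le hr1.le (by omega)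
    have h1r : 1 - r = 3 / n := by
      rw [hr]; field_simp; ring
    -- (n+4)/φ ≤ 1/(200000 n) < r^(2n) * (3/n) ≤ r^(2i-1)*(1-r)
    have hstep1 : ((n : ℝ) + 4) / φ ≤ 1 / (200000 * n) := by
      rw [hφ, div_le_div_iff₀ (by positivity) (by positivity)]
      nlinarith
    have hstep2 : 1 / (200000 * (n : ℝ)) < r ^ (2 * n) * (3 / n) := by
      have h3n : (0 : ℝ) < 3 / n := by positivity
      have := mul_lt_mul_of_pos_right hK h3n
      calc 1 / (200000 * (n : ℝ)) = 1 / 600000 * (3 / n) := by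
            field_simp; ring
        _ < r ^ (2 * n) * (3 / n) := this
    have hstep3 : r ^ (2 * n) * (3 / n) ≤ r ^ (2 * i - 1) * (3 / n) := by
      apply mul_le_mul_of_nonneg_right hmono (by positivity)
    have : ((n : ℝ) + 4) / φ < r ^ (2 * i - 1) * (1 - r) := by
      rw [h1r]; linarith
    nlinarith [this, hsplit]
  refine ⟨?_, key⟩
  intro s w t p q hs hw ht hp hq
  have hsum_s : ∑ j, s j ≤ (n + 3 : ℕ) * (1 / φ) := by
    calc ∑ j, s j ≤ ∑ _j : Fin (n + 3), (1 / φ) :=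
          Finset.sum_le_sum fun j _ => (hs j).2
      _ = (n + 3 : ℕ) * (1 / φ) := by
          rw [Finset.sum_const, Finset.card_univ, Fintype.card_fin]; simp
  have hsum_p : (0 : ℝ) ≤ ∑ j, p j :=
    Finset.sum_nonneg fun j _ => (hp j).1
  have hcast : ((n + 3 : ℕ) : ℝ) = (n : ℝ) + 3 := by push_cast; ring
  have hdiv : ((n : ℝ) + 4) / φ = 1 / φ + ((n : ℝ) + 3) * (1 / φ) := by
    field_simp; ring
  obtain ⟨hw1, hw2⟩ := hw
  obtain ⟨ht1, ht2⟩ := ht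
  obtain ⟨hq1, hq2⟩ := hq
  rw [hcast] at hsum_s
  linarith
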